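/- arXiv:2202.03362 — 2 statements merged into one kernel-verified Lean document; each statement's English description precedes it below -/
import Mathlib

section
/- Suppose ω_N = (α^{+,(N)}, α^{−,(N)}, γ₁^{(N)}, δ^{(N)}) ∈ Ω̂ converges to ω = (α⁺, α⁻, γ₁, δ) ∈ Ω̂ coordinate-wise (α_i^{±,(N)} → α_i^{±} for every i, γ₁^{(N)} → γ₁, δ^{(N)} → δ). Then ∑_{i=1}^∞ |α_i^{+,(N)} − α_i⁺|³ → 0 and ∑_{i=1}^∞ |α_i^{−,(N)} − α_i⁻|³ → 0 as N → ∞. -/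
open Filter Topology Finset

/-- The parameter space Ω̂ of quadruples (α⁺, α⁻, γ₁, δ). -/
structure OmegaHat where
  aP : ℕ → ℝ
  aM : ℕ → ℝ
  g1 : ℝ
  del : ℝ
  aP_nonneg : ∀ i, 0 ≤ aP i
  aM_nonneg : ∀ i, 0 ≤ aM i
  aP_antitone : Antitone aP
  aM_antitone : Antitone aM
  del_nonneg : 0 ≤ del
  summable_aP_sq : Summable fun i => aP i ^ 2
  summable_aM_sq : Summable fun i => aM i ^ 2
  sum_sq_le : (∑' i, aP i ^ 2) + (∑' i, aM i ^ 2) ≤ del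

/-- γ₂ = δ − ∑ (α_i⁺)² − ∑ (α_i⁻)². -/
noncomputable def gamma2 (ω : OmegaHat) : ℝ :=
  ω.del - (∑' i, ω.aP i ^ 2) - (∑' i, ω.aM i ^ 2)

/-- The Laguerre–Pólya function E_ω. -/
noncomputable def Eomega (ω : OmegaHat) (z : ℂ) : ℂ :=
  Complex.exp (-(ω.g1 : ℂ) * z - (gamma2 ω : ℂ) / 2 * z ^ 2) *
    (∏' i, (Complex.exp (z * (ω.aP i : ℂ)) * (1 - z * (ω.aP i : ℂ)))) *
    (∏' i, (Complex.exp (-(z * (ω.aM i : ℂ))) * (1 + z * (ω.aM i : ℂ))))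


lemma ptbnd (a : ℕ → ℝ) (hn : ∀ i, 0 ≤ a i) (ha : Antitone a)
    (hs : Summable fun i => a i ^ 2) {d : ℝ} (hd : ∑' i, a i ^ 2 ≤ d) (i : ℕ) :
    a i ≤ Real.sqrt (d / (i + 1)) := by
  have h1 : ((i : ℝ) + 1) * a i ^ 2 ≤ ∑ j ∈ Finset.range (i + 1), a j ^ 2 := by
    have := Finset.card_nsmul_le_sum (Finset.range (i+1)) (fun j => a j ^ 2) (a i ^ 2)
      (fun j hj => by
        have hj' : j ≤ i := Nat.lt_succ_iff.mp (Finset.mem_range.mp hj)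
        exact pow_le_pow_left₀ (hn i) (ha hj') 2)
    simpa [nsmul_eq_mul, mul_comm] using this
  have h2 : ∑ j ∈ Finset.range (i + 1), a j ^ 2 ≤ ∑' j, a j ^ 2 :=
    Summable.sum_le_tsum _ (fun j _ => sq_nonneg _) hs
  have h3 : a i ^ 2 ≤ d / ((i : ℝ) + 1) := by
    rw [le_div_iff₀ (by positivity)]
    nlinarith
  calc a i = Real.sqrt (a i ^ 2) := by rw [Real.sqrt_sq (hn i)]
    _ ≤ Real.sqrt (d / (i + 1)) := Real.sqrt_le_sqrt h3

lemma sum3 (a : ℕ → ℝ) (hn : ∀ i, 0 ≤ a i) (ha : Antitone a)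
    (hs : Summable fun i => a i ^ 2) : Summable fun i => a i ^ 3 := by
  refine Summable.of_nonneg_of_le (fun i => pow_nonneg (hn i) 3)
    (fun i => ?_) (hs.mul_left (a 0))
  have h0 : a i ≤ a 0 := ha (Nat.zero_le i)
  nlinarith [hn i, sq_nonneg (a i)]

lemma abs_sub_le_max (a b : ℝ) (ha : 0 ≤ a) (hb : 0 ≤ b) : |a - b| ≤ max a b := by
  rw [abs_sub_le_iff]
  constructor
  · linarith [le_max_left a b]
  · linarith [le_max_right a b]

lemma diff3_summable (a b : ℕ → ℝ) (ha0 : ∀ i, 0 ≤ a i) (hb0 : ∀ i, 0 ≤ b i)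
    (ha : Summable fun i => a i ^ 3) (hb : Summable fun i => b i ^ 3) :
    Summable fun i => |a i - b i| ^ 3 := by
  refine Summable.of_nonneg_of_le (fun i => pow_nonneg (abs_nonneg _) 3)
    (fun i => ?_) (ha.add hb)
  have h1 : |a i - b i| ≤ max (a i) (b i) := abs_sub_le_max _ _ (ha0 i) (hb0 i)
  have h2 : |a i - b i| ^ 3 ≤ max (a i) (b i) ^ 3 :=
    pow_le_pow_left₀ (abs_nonneg _) h1 3
  rcases max_cases (a i) (b i) with ⟨h, _⟩ | ⟨h, _⟩ <;> rw [h] at h2 <;>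
    nlinarith [pow_nonneg (ha0 i) 3, pow_nonneg (hb0 i) 3]

lemma sqrt_cube (D : ℝ) (hD : 0 ≤ D) (n : ℕ) :
    Real.sqrt (D / (n + 1)) ^ 3 = D ^ ((3:ℝ)/2) * ((n:ℝ) + 1) ^ (-((3:ℝ)/2)) := by
  have hx : (0:ℝ) ≤ D / ((n:ℝ) + 1) := div_nonneg hD (by positivity)
  rw [Real.sqrt_eq_rpow, ← Real.rpow_natCast (_ ^ ((1:ℝ)/2)) 3, ← Real.rpow_mul hx]
  norm_num
  rw [Real.div_rpow hD (by positivity), Real.rpow_neg (by positivity), div_eq_mul_inv]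

lemma bound_summable : Summable fun n : ℕ => ((n:ℝ) + 1) ^ (-((3:ℝ)/2)) := by
  have := (summable_nat_add_iff 1).mpr
    (Real.summable_nat_rpow.mpr (show -((3:ℝ)/2) < -1 by norm_num))
  simpa [Nat.cast_add] using this

lemma tend_aux (f : ℕ → ℕ → ℝ) (a : ℕ → ℝ) (df : ℕ → ℝ) (d : ℝ) (hd0 : 0 ≤ d)
    (hfb : ∀ N i, f N i ≤ Real.sqrt (df N / (i + 1))) (hf0 : ∀ N i, 0 ≤ f N i)
    (hab : ∀ i, a i ≤ Real.sqrt (d / (i + 1))) (ha0 : ∀ i, 0 ≤ a i)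
    (hpt : ∀ i, Tendsto (fun N => f N i) atTop (nhds (a i)))
    (hdf : Tendsto df atTop (nhds d)) :
    Tendsto (fun N => ∑' i, |f N i - a i| ^ 3) atTop (nhds 0) := by
  have key := tendsto_tsum_of_dominated_convergence
    (f := fun N i => |f N i - a i| ^ 3) (g := fun _ => (0:ℝ))
    (bound := fun i => (d+1) ^ ((3:ℝ)/2) * ((i:ℝ) + 1) ^ (-((3:ℝ)/2)))
    (bound_summable.mul_left _)
    (fun i => by
      have h : Tendsto (fun N => f N i - a i) atTop (nhds (a i - a i)) :=
        (hpt i).sub tendsto_const_nhds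
      have h2 : Tendsto (fun N => |f N i - a i| ^ 3) atTop (nhds (|a i - a i| ^ 3)) :=
        h.abs.pow 3
      simpa using h2)
    ?_
  · simpa using key
  · have hev : ∀ᶠ N in atTop, df N ≤ d + 1 :=
      hdf.eventually (eventually_le_nhds (by linarith))
    filter_upwards [hev] with N hN i
    have h1 : |f N i - a i| ≤ Real.sqrt ((d+1) / (i + 1)) := by
      have hfi : f N i ≤ Real.sqrt ((d+1) / (i + 1)) :=
        (hfb N i).trans (Real.sqrt_le_sqrt (by gcongr))
      have hai : a i ≤ Real.sqrt ((d+1) / (i + 1)) :=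
        (hab i).trans (Real.sqrt_le_sqrt (by gcongr; linarith))
      exact (abs_sub_le_max _ _ (hf0 N i) (ha0 i)).trans (max_le hfi hai)
    have h2 : |f N i - a i| ^ 3 ≤ Real.sqrt ((d+1) / (i + 1)) ^ 3 :=
      pow_le_pow_left₀ (abs_nonneg _) h1 3
    rw [sqrt_cube (d+1) (by linarith) i] at h2
    have : ‖|f N i - a i| ^ 3‖ = |f N i - a i| ^ 3 := by
      rw [Real.norm_eq_abs, abs_of_nonneg (pow_nonneg (abs_nonneg _) 3)]
    rw [this]
    exact h2

lemma tsumP_le (w : OmegaHat) : ∑' i, w.aP i ^ 2 ≤ w.del := by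
  have : (0:ℝ) ≤ ∑' i, w.aM i ^ 2 := tsum_nonneg (fun i => sq_nonneg (w.aM i))
  linarith [w.sum_sq_le]

lemma tsumM_le (w : OmegaHat) : ∑' i, w.aM i ^ 2 ≤ w.del := by
  have : (0:ℝ) ≤ ∑' i, w.aP i ^ 2 := tsum_nonneg (fun i => sq_nonneg (w.aP i))
  linarith [w.sum_sq_le]

/-- if ω_N → ω coordinate-wise in Ω̂, then
∑_i |α_i^{+,(N)} − α_i⁺|³ → 0 and ∑_i |α_i^{−,(N)} − α_i⁻|³ → 0. -/
theorem stmt13 (ωs : ℕ → OmegaHat) (ω : OmegaHat)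
    (hP : ∀ i, Filter.Tendsto (fun N => (ωs N).aP i) Filter.atTop (nhds (ω.aP i)))
    (hM : ∀ i, Filter.Tendsto (fun N => (ωs N).aM i) Filter.atTop (nhds (ω.aM i)))
    (hg : Filter.Tendsto (fun N => (ωs N).g1) Filter.atTop (nhds ω.g1))
    (hd : Filter.Tendsto (fun N => (ωs N).del) Filter.atTop (nhds ω.del)) :
    (∀ N, Summable fun i => |(ωs N).aP i - ω.aP i| ^ 3) ∧
    (∀ N, Summable fun i => |(ωs N).aM i - ω.aM i| ^ 3) ∧
    Filter.Tendsto (fun N => ∑' i, |(ωs N).aP i - ω.aP i| ^ 3) Filter.atTop (nhds 0) ∧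
    Filter.Tendsto (fun N => ∑' i, |(ωs N).aM i - ω.aM i| ^ 3) Filter.atTop (nhds 0) := by
  refine ⟨fun N => diff3_summable _ _ (ωs N).aP_nonneg ω.aP_nonneg
      (sum3 _ (ωs N).aP_nonneg (ωs N).aP_antitone (ωs N).summable_aP_sq)
      (sum3 _ ω.aP_nonneg ω.aP_antitone ω.summable_aP_sq),
    fun N => diff3_summable _ _ (ωs N).aM_nonneg ω.aM_nonneg
      (sum3 _ (ωs N).aM_nonneg (ωs N).aM_antitone (ωs N).summable_aM_sq)
      (sum3 _ ω.aM_nonneg ω.aM_antitone ω.summable_aM_sq),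
    tend_aux (fun N => (ωs N).aP) ω.aP (fun N => (ωs N).del) ω.del ω.del_nonneg
      (fun N i => ptbnd _ (ωs N).aP_nonneg (ωs N).aP_antitone (ωs N).summable_aP_sq
        (tsumP_le (ωs N)) i)
      (fun N => (ωs N).aP_nonneg)
      (fun i => ptbnd _ ω.aP_nonneg ω.aP_antitone ω.summable_aP_sq (tsumP_le ω) i)
      ω.aP_nonneg hP hd,
    tend_aux (fun N => (ωs N).aM) ω.aM (fun N => (ωs N).del) ω.del ω.del_nonneg
      (fun N i => ptbnd _ (ωs N).aM_nonneg (ωs N).aM_antitone (ωs N).summable_aM_sq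
        (tsumM_le (ωs N)) i)
      (fun N => (ωs N).aM_nonneg)
      (fun i => ptbnd _ ω.aM_nonneg ω.aM_antitone ω.summable_aM_sq (tsumM_le ω) i)
      ω.aM_nonneg hM hd⟩
end

section
/- The map ω ↦ E_ω from Ω̂ to entire functions is injective: if ω, ω̃ ∈ Ω̂ and E_ω(z) = E_{ω̃}(z) for all z ∈ ℂ, then ω = ω̃. -/
open Filter Topology Finset

/-- elementary factor -/
noncomputable def ef (a : ℝ) (z : ℂ) : ℂ := Complex.exp (z * a) * (1 - z * a)

lemma ef_sub_one_bound {a : ℝ} {z : ℂ} (h : ‖z * a‖ ≤ 1) : ‖ef a z - 1‖ ≤ 3 * ‖z * a‖ ^ 2 := by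
  set w : ℂ := z * a with hw
  have h1 : ef a z - 1 = (Complex.exp w - 1 - w) - w * (Complex.exp w - 1) := by
    rw [ef, ← hw]; ring
  rw [h1]
  have b1 := Complex.norm_exp_sub_one_sub_id_le (x := w) (by simpa using h)
  have b2 := Complex.norm_exp_sub_one_le (x := w) (by simpa using h)
  calc ‖Complex.exp w - 1 - w - w * (Complex.exp w - 1)‖
      ≤ ‖Complex.exp w - 1 - w‖ + ‖w * (Complex.exp w - 1)‖ := norm_sub_le _ _
    _ ≤ ‖w‖ ^ 2 + ‖w‖ * (2 * ‖w‖) := by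
        gcongr
        · rw [norm_mul]; exact mul_le_mul_of_nonneg_left b2 (norm_nonneg _)
    _ ≤ 3 * ‖w‖ ^ 2 := by ring_nf; nlinarith [norm_nonneg w]

lemma ef_ne_zero_of_close {a : ℝ} {z : ℂ} (h : ‖ef a z - 1‖ ≤ 1/2) : ef a z ≠ 0 := by
  intro h0
  rw [h0] at h
  norm_num at h

lemma log_ef_bound {a : ℝ} {z : ℂ} (h : ‖ef a z - 1‖ ≤ 1/2) :
    ‖Complex.log (ef a z)‖ ≤ (3/2) * ‖ef a z - 1‖ := by
  have := Complex.norm_log_one_add_half_le_self (z := ef a z - 1) h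
  simpa using this

lemma mem_slitPlane_of_close {w : ℂ} (h : ‖w - 1‖ ≤ 1/2) : w ∈ Complex.slitPlane := by
  rw [Complex.mem_slitPlane_iff]
  left
  have : |(w - 1).re| ≤ 1/2 := le_trans (Complex.abs_re_le_norm _) h
  have : (w - 1).re = w.re - 1 := by simp
  nlinarith [le_trans (Complex.abs_re_le_norm (w-1)) h, abs_le.mp (le_trans (Complex.abs_re_le_norm (w-1)) h)]

lemma ef_continuous (a : ℝ) : Continuous (ef a) := by
  unfold ef
  exact (Complex.continuous_exp.comp (continuous_id.mul continuous_const)).mul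
    (continuous_const.sub (continuous_id.mul continuous_const))


lemma abs_tendsto_zero {a : ℕ → ℝ} (hsq : Summable fun i => (a i)^2) :
    Tendsto (fun i => |a i|) atTop (𝓝 0) := by
  have h1 : Tendsto (fun i => (a i)^2) atTop (𝓝 0) := hsq.tendsto_atTop_zero
  have h2 : Tendsto (fun i => Real.sqrt ((a i)^2)) atTop (𝓝 (Real.sqrt 0)) :=
    (Real.continuous_sqrt.tendsto 0).comp h1
  simpa [Real.sqrt_sq_eq_abs] using h2


lemma keyFactor (a : ℕ → ℝ) (hsq : Summable fun i => (a i)^2) (z₀ : ℂ) (hz₀ : z₀ ≠ 0) :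
    ∃ C : ℂ → ℂ, ContinuousAt C z₀ ∧ C z₀ ≠ 0 ∧
      ∀ᶠ z in 𝓝 z₀, (∏' i, ef (a i) z)
        = (1 - z / z₀) ^ (Set.ncard {i | (a i : ℂ) * z₀ = 1}) * C z := by
  classical
  obtain ⟨R, hR⟩ : ∃ R : ℝ, R = ‖z₀‖ + 1 := ⟨_, rfl⟩
  have hRpos : 0 < R := by rw [hR]; positivity
  have hzR : ∀ z ∈ Metric.ball z₀ 1, ‖z‖ < R := by
    intro z hz
    rw [Metric.mem_ball, dist_eq_norm] at hz
    calc ‖z‖ = ‖z₀ + (z - z₀)‖ := by ring_nf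
      _ ≤ ‖z₀‖ + ‖z - z₀‖ := norm_add_le _ _
      _ < R := by rw [hR]; linarith
  -- choose i₀
  have hev : ∀ᶠ i in atTop, |a i| < 1/(4*R) := by
    have := abs_tendsto_zero hsq
    exact this.eventually_lt_const (by positivity)
  obtain ⟨i₀, hi₀⟩ := eventually_atTop.mp hev
  have hsmall : ∀ z ∈ Metric.ball z₀ 1, ∀ i, i₀ ≤ i → ‖z * (a i : ℂ)‖ ≤ 1/4 := by
    intro z hz i hi
    rw [norm_mul, Complex.norm_real]
    calc ‖z‖ * |a i| ≤ R * (1/(4*R)) := by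
          apply mul_le_mul (le_of_lt (hzR z hz)) (le_of_lt (hi₀ i hi)) (abs_nonneg _)
            (le_of_lt hRpos)
      _ = 1/4 := by field_simp
  have hclose : ∀ z ∈ Metric.ball z₀ 1, ∀ i, i₀ ≤ i → ‖ef (a i) z - 1‖ ≤ 1/2 := by
    intro z hz i hi
    have h1 := hsmall z hz i hi
    have := ef_sub_one_bound (a := a i) (z := z) (by linarith)
    nlinarith [norm_nonneg (z * (a i : ℂ))]
  have hboundsq : ∀ z ∈ Metric.ball z₀ 1, ∀ i, i₀ ≤ i →
      ‖Complex.log (ef (a i) z)‖ ≤ (9/2) * R^2 * (a i)^2 := by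
    intro z hz i hi
    have h1 := hsmall z hz i hi
    have h2 := hclose z hz i hi
    have h3 := log_ef_bound h2
    have h4 := ef_sub_one_bound (a := a i) (z := z) (by linarith)
    have h5 : ‖z * (a i : ℂ)‖ ^ 2 ≤ R^2 * (a i)^2 := by
      rw [norm_mul, Complex.norm_real, mul_pow, Real.norm_eq_abs, _root_.sq_abs]
      have : ‖z‖^2 ≤ R^2 := by nlinarith [norm_nonneg z, hzR z hz]
      nlinarith [sq_nonneg (a i)]
    calc ‖Complex.log (ef (a i) z)‖ ≤ (3/2) * ‖ef (a i) z - 1‖ := h3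
      _ ≤ (3/2) * (3 * ‖z * (a i : ℂ)‖^2) := by linarith
      _ ≤ (3/2) * (3 * (R^2 * (a i)^2)) := by linarith
      _ = 9/2 * R^2 * (a i)^2 := by ring
  -- the exceptional finite set
  set S : Finset ℕ := (Finset.range i₀).filter (fun i => (a i : ℂ) * z₀ = 1) with hSdef
  have hSset : {i | (a i : ℂ) * z₀ = 1} = ↑S := by
    ext i
    simp only [Set.mem_setOf_eq, hSdef, coe_filter, Finset.mem_range, Set.mem_setOf_eq]
    constructor
    · intro hi
      refine ⟨?_, hi⟩
      by_contra hcon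
      push_neg at hcon
      have : ‖(a i : ℂ) * z₀‖ = 1 := by rw [hi]; simp
      rw [norm_mul, Complex.norm_real, Real.norm_eq_abs] at this
      have h1 : |a i| < 1/(4*R) := hi₀ i hcon
      have h2 : ‖z₀‖ < R := by rw [hR]; linarith
      have h6 : 1/(4*R) * R = 1/4 := by field_simp
      have h7 : |a i| * ‖z₀‖ ≤ |a i| * R := mul_le_mul_of_nonneg_left h2.le (abs_nonneg _)
      have h8 : |a i| * R < 1/(4*R) * R := mul_lt_mul_of_pos_right h1 hRpos
      have h9 : (1:ℝ) ≤ |a i| * R := by rw [← this]; exact h7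
      rw [h6] at h8
      linarith
    · exact fun h => h.2
  set m : ℕ := S.card with hm
  have hncard : Set.ncard {i | (a i : ℂ) * z₀ = 1} = m := by
    rw [hSset, Set.ncard_coe_finset]
  -- tail set
  set s : Set ℕ := ↑(Finset.range i₀) with hs
  have hmem_compl : ∀ i : ℕ, i ∈ sᶜ ↔ i₀ ≤ i := by
    intro i
    simp [hs, Set.mem_compl_iff, Finset.mem_coe, Finset.mem_range, not_lt]
  -- summability of logs on the ball
  have hu : Summable (fun i : ↥sᶜ => (9/2) * R^2 * (a i)^2) :=
    ((hsq.mul_left ((9/2) * R^2))).subtype _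
  have hlog_sum : ∀ z ∈ Metric.ball z₀ 1,
      Summable fun i : ↥sᶜ => Complex.log (ef (a (i : ℕ)) z) := by
    intro z hz
    apply Summable.of_norm_bounded hu
    intro i
    exact hboundsq z hz i ((hmem_compl i).mp i.2)
  -- the tail sum function
  set h : ℂ → ℂ := fun z => ∑' (i : ↥sᶜ), Complex.log (ef (a (i : ℕ)) z) with hhdef
  have hcontOn : ContinuousOn h (Metric.ball z₀ 1) := by
    apply continuousOn_tsum (u := fun i : ↥sᶜ => (9/2) * R^2 * (a i)^2) _ hu
    · intro i z hz
      exact hboundsq z hz i ((hmem_compl i).mp i.2)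
    · intro i
      apply ContinuousOn.clog ((ef_continuous _).continuousOn)
      intro z hz
      have := hclose z hz i ((hmem_compl i).mp i.2)
      exact mem_slitPlane_of_close this
  -- tail factors nonzero on the ball
  have hne : ∀ z ∈ Metric.ball z₀ 1, ∀ i : ↥sᶜ, ef (a (i : ℕ)) z ≠ 0 := by
    intro z hz i
    exact ef_ne_zero_of_close (hclose z hz i ((hmem_compl i).mp i.2))
  -- tail product = exp of tail sum, and multipliability
  have htail : ∀ z ∈ Metric.ball z₀ 1,
      (∏' (i : ↥sᶜ), ef (a (i : ℕ)) z) = Complex.exp (h z) := by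
    intro z hz
    exact (Complex.cexp_tsum_eq_tprod (fun i => hne z hz i) (hlog_sum z hz)).symm
  have hmult_tail : ∀ z ∈ Metric.ball z₀ 1,
      Multipliable fun i : ↥sᶜ => ef (a (i : ℕ)) z := by
    intro z hz
    exact Complex.multipliable_of_summable_log (hlog_sum z hz)
  -- split the full product
  have hsplit : ∀ z ∈ Metric.ball z₀ 1,
      (∏' i, ef (a i) z) = (∏ i ∈ Finset.range i₀, ef (a i) z) * Complex.exp (h z) := by
    intro z hz
    have h1 : Multipliable (fun i : ↥s => ef (a (i : ℕ)) z) := Multipliable.of_finite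
    have h2 := Multipliable.tprod_mul_tprod_compl (f := fun i => ef (a i) z) h1 (hmult_tail z hz)
    rw [← h2, htail z hz]
    congr 1
    exact Finset.tprod_subtype' (Finset.range i₀) (fun i => ef (a i) z)
  -- define C
  refine ⟨fun z => Complex.exp (z * z₀⁻¹) ^ m *
      (∏ i ∈ Finset.range i₀ \ S, ef (a i) z) * Complex.exp (h z), ?_, ?_, ?_⟩
  · apply ContinuousAt.mul
    apply ContinuousAt.mul
    · exact ((Complex.continuous_exp.comp (continuous_id.mul continuous_const)).pow m).continuousAt
    · exact (continuous_finset_prod _ fun i _ => ef_continuous _).continuousAt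
    · exact Complex.continuous_exp.continuousAt.comp
        (hcontOn.continuousAt (Metric.ball_mem_nhds z₀ one_pos))
  · apply mul_ne_zero
    apply mul_ne_zero
    · exact pow_ne_zero _ (Complex.exp_ne_zero _)
    · apply Finset.prod_ne_zero_iff.mpr
      intro i hi
      rw [Finset.mem_sdiff] at hi
      apply mul_ne_zero (Complex.exp_ne_zero _)
      intro hcon
      apply hi.2
      rw [hSdef, Finset.mem_filter]
      refine ⟨hi.1, ?_⟩
      have : z₀ * (a i : ℂ) = 1 := by
        have := sub_eq_zero.mp hcon
        linear_combination -this
      linear_combination this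
    · exact Complex.exp_ne_zero _
  · filter_upwards [Metric.ball_mem_nhds z₀ one_pos] with z hz
    rw [hsplit z hz, hncard]
    have hprodsplit : (∏ i ∈ Finset.range i₀, ef (a i) z)
        = (∏ i ∈ Finset.range i₀ \ S, ef (a i) z) * ∏ i ∈ S, ef (a i) z := by
      rw [Finset.prod_sdiff (Finset.filter_subset _ _)]
    have hSprod : (∏ i ∈ S, ef (a i) z)
        = (Complex.exp (z * z₀⁻¹)) ^ m * (1 - z / z₀) ^ m := by
      have : ∀ i ∈ S, ef (a i) z = Complex.exp (z * z₀⁻¹) * (1 - z / z₀) := by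
        intro i hi
        rw [hSdef, Finset.mem_filter] at hi
        have hai : (a i : ℂ) = z₀⁻¹ := eq_inv_of_mul_eq_one_left (by linear_combination hi.2)
        rw [ef, hai, div_eq_mul_inv]
      rw [Finset.prod_congr rfl this, Finset.prod_const, hm, mul_pow]
    rw [hprodsplit, hSprod]
    ring

/-- equal local vanishing orders -/
lemma ord_eq {z₀ : ℂ} (hz₀ : z₀ ≠ 0) {m m' : ℕ} {C C' : ℂ → ℂ}
    (hC : ContinuousAt C z₀) (hC0 : C z₀ ≠ 0) (hC' : ContinuousAt C' z₀) (hC0' : C' z₀ ≠ 0)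
    (heq : ∀ᶠ z in 𝓝 z₀, (1 - z / z₀) ^ m * C z = (1 - z / z₀) ^ m' * C' z) : m = m' := by
  -- an auxiliary claim : not (m < m')
  have key : ∀ (k k' : ℕ) (D D' : ℂ → ℂ), ContinuousAt D z₀ → D z₀ ≠ 0 → ContinuousAt D' z₀ →
      (∀ᶠ z in 𝓝 z₀, (1 - z / z₀) ^ k * D z = (1 - z / z₀) ^ k' * D' z) → ¬ (k < k') := by
    intro k k' D D' hD hD0 hD' he hlt
    have hfac : ∀ᶠ z in 𝓝[≠] z₀, D z = (1 - z / z₀) ^ (k' - k) * D' z := by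
      filter_upwards [he.filter_mono nhdsWithin_le_nhds, self_mem_nhdsWithin] with z hz hz'
      have hne : (1 - z / z₀) ≠ 0 := by
        intro hc
        apply hz'
        have : z / z₀ = 1 := by linear_combination -hc
        field_simp at this
        exact this
      have hpow : (1 - z / z₀) ^ k' = (1 - z / z₀) ^ k * (1 - z / z₀) ^ (k' - k) := by
        rw [← pow_add]
        congr 1
        omega
      rw [hpow, mul_assoc] at hz
      exact mul_left_cancel₀ (pow_ne_zero _ hne) hz
    have h1 : Tendsto D (𝓝[≠] z₀) (𝓝 (D z₀)) := hD.continuousWithinAt.tendsto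
    have h2 : Tendsto (fun z => (1 - z / z₀) ^ (k' - k) * D' z) (𝓝[≠] z₀) (𝓝 0) := by
      have hc : Tendsto (fun z => (1 - z / z₀) ^ (k' - k) * D' z) (𝓝 z₀) (𝓝 ((1 - z₀/z₀) ^ (k' - k) * D' z₀)) := by
        apply Tendsto.mul _ hD'.tendsto
        exact (((continuous_const.sub (continuous_id.div_const z₀)).pow _).tendsto z₀)
      rw [div_self hz₀] at hc
      have : ((1:ℂ) - 1) ^ (k' - k) = 0 := by
        rw [sub_self, zero_pow]
        omega
      rw [this, zero_mul] at hc
      exact hc.mono_left nhdsWithin_le_nhds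
    have := tendsto_nhds_unique (h1.congr' hfac) h2
    exact hD0 this
  rcases lt_trichotomy m m' with h | h | h
  · exact absurd h (key m m' C C' hC hC0 hC' heq)
  · exact h
  · exact absurd h (key m' m C' C hC' hC0' hC (by filter_upwards [heq] with z hz using hz.symm))

/-- a nonneg antitone null sequence is determined by its fibers over positive reals -/
lemma seq_eq_of_fibers {a a' : ℕ → ℝ} (hna : ∀ i, 0 ≤ a i) (hna' : ∀ i, 0 ≤ a' i)
    (hmono : Antitone a) (hmono' : Antitone a')
    (h0 : Tendsto (fun i => |a i|) atTop (𝓝 0)) (h0' : Tendsto (fun i => |a' i|) atTop (𝓝 0))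
    (hfib : ∀ r : ℝ, 0 < r → Set.ncard {i | a i = r} = Set.ncard {i | a' i = r}) : a = a' := by
  have hfin : ∀ (b : ℕ → ℝ), Tendsto (fun i => |b i|) atTop (𝓝 0) → ∀ r : ℝ, 0 < r →
      {i | b i = r}.Finite := by
    intro b hb r hr
    have : ∀ᶠ i in atTop, |b i| < r := hb.eventually_lt_const hr
    obtain ⟨K, hK⟩ := eventually_atTop.mp this
    apply Set.Finite.subset (Set.finite_Iio K)
    intro i hi
    simp only [Set.mem_setOf_eq] at hi
    by_contra hcon
    simp only [Set.mem_Iio, not_lt] at hcon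
    have := hK i hcon
    rw [hi] at this
    have := abs_lt.mp this
    linarith
  -- main claim, asymmetric version
  have main : ∀ (b b' : ℕ → ℝ), (∀ i, 0 ≤ b i) → (∀ i, 0 ≤ b' i) → Antitone b → Antitone b' →
      Tendsto (fun i => |b i|) atTop (𝓝 0) → Tendsto (fun i => |b' i|) atTop (𝓝 0) →
      (∀ r : ℝ, 0 < r → Set.ncard {i | b i = r} = Set.ncard {i | b' i = r}) →
      ∀ n : ℕ, (∀ j, j < n → b j = b' j) → ¬ (b' n < b n) := by
    intro b b' hnb hnb' hm hm' hb hb' hf n hpre hlt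
    set r : ℝ := b n with hrdef
    have hr : 0 < r := lt_of_le_of_lt (hnb' n) hlt
    have hsub : {i | b' i = r} ⊂ {i | b i = r} := by
      constructor
      · intro j hj
        simp only [Set.mem_setOf_eq] at hj ⊢
        have hjn : j < n := by
          by_contra hc
          push_neg at hc
          have := hm' hc
          rw [hj] at this
          linarith
        rw [hpre j hjn]
        exact hj
      · intro hsup
        have hn : n ∈ {i | b i = r} := rfl
        have := hsup hn
        simp only [Set.mem_setOf_eq] at this
        linarith
    have := Set.ncard_lt_ncard hsub (hfin b hb r hr)
    rw [hf r hr] at this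
    exact lt_irrefl _ this
  funext n
  induction n using Nat.strong_induction_on with
  | _ n ih =>
    by_contra hne
    rcases lt_or_gt_of_ne hne with h | h
    · exact main a' a hna' hna hmono' hmono h0' h0
        (fun r hr => (hfib r hr).symm) n (fun j hj => (ih j hj).symm) h
    · exact main a a' hna hna' hmono hmono' h0 h0' hfib n (fun j hj => ih j hj) h

/-- The Gaussian-exponential prefactor. -/
noncomputable def Apre (ω : OmegaHat) (z : ℂ) : ℂ :=
  Complex.exp (-(ω.g1 : ℂ) * z - (gamma2 ω : ℂ) / 2 * z ^ 2)



lemma Eomega_eq (ω : OmegaHat) (z : ℂ) :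
    Eomega ω z = Apre ω z * (∏' i, ef (ω.aP i) z) * (∏' i, ef (-(ω.aM i)) z) := by
  rw [Eomega, Apre]
  have h1 : (∏' i, (Complex.exp (z * (ω.aP i : ℂ)) * (1 - z * (ω.aP i : ℂ))))
      = ∏' i, ef (ω.aP i) z := tprod_congr fun i => rfl
  have h2 : (∏' i, (Complex.exp (-(z * (ω.aM i : ℂ))) * (1 + z * (ω.aM i : ℂ))))
      = ∏' i, ef (-(ω.aM i)) z := by
    apply tprod_congr
    intro i
    simp only [ef]
    push_cast
    rw [mul_neg, sub_neg_eq_add]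
  rw [h1, h2]

lemma Apre_continuous (ω : OmegaHat) : Continuous (Apre ω) := by
  apply Complex.continuous_exp.comp
  exact ((continuous_const.mul continuous_id).sub (continuous_const.mul (continuous_pow 2)))

/-- combined local multiplicity -/
noncomputable def NN (ω : OmegaHat) (z₀ : ℂ) : ℕ :=
  Set.ncard {i | (ω.aP i : ℂ) * z₀ = 1} + Set.ncard {i | ((-(ω.aM i) : ℝ) : ℂ) * z₀ = 1}

lemma Efactor (ω : OmegaHat) (z₀ : ℂ) (hz₀ : z₀ ≠ 0) :
    ∃ C : ℂ → ℂ, ContinuousAt C z₀ ∧ C z₀ ≠ 0 ∧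
      ∀ᶠ z in 𝓝 z₀, Eomega ω z = (1 - z / z₀) ^ (NN ω z₀) * C z := by
  obtain ⟨C₁, hC₁, hC₁0, h₁⟩ := keyFactor ω.aP ω.summable_aP_sq z₀ hz₀
  obtain ⟨C₂, hC₂, hC₂0, h₂⟩ := keyFactor (fun i => -(ω.aM i))
    (by simpa using ω.summable_aM_sq) z₀ hz₀
  refine ⟨fun z => Apre ω z * C₁ z * C₂ z, ?_, ?_, ?_⟩
  · exact (((Apre_continuous ω).continuousAt.mul hC₁).mul hC₂)
  · exact mul_ne_zero (mul_ne_zero (Complex.exp_ne_zero _) hC₁0) hC₂0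
  · filter_upwards [h₁, h₂] with z hz₁ hz₂
    rw [Eomega_eq, hz₁, hz₂, NN, pow_add]
    ring

/-- the combined multiplicities agree. -/
lemma NN_eq (ω ω' : OmegaHat) (h : ∀ z : ℂ, Eomega ω z = Eomega ω' z) (z₀ : ℂ) (hz₀ : z₀ ≠ 0) :
    NN ω z₀ = NN ω' z₀ := by
  obtain ⟨C, hC, hC0, hev⟩ := Efactor ω z₀ hz₀
  obtain ⟨C', hC', hC0', hev'⟩ := Efactor ω' z₀ hz₀
  apply ord_eq hz₀ hC hC0 hC' hC0'
  filter_upwards [hev, hev'] with z hz hz'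
  rw [← hz, ← hz', h z]

lemma NN_I_eq_zero (ω : OmegaHat) (t : ℝ) : NN ω (Complex.I * t) = 0 := by
  have hempty : ∀ b : ℝ, ¬ ((b : ℂ) * (Complex.I * t) = 1) := by
    intro b hb
    have := congrArg Complex.re hb
    simp [Complex.mul_re] at this
  rw [NN]
  have e1 : {i | (ω.aP i : ℂ) * (Complex.I * t) = 1} = (∅ : Set ℕ) :=
    Set.eq_empty_iff_forall_notMem.mpr fun i => hempty _
  have e2 : {i | ((-(ω.aM i) : ℝ) : ℂ) * (Complex.I * t) = 1} = (∅ : Set ℕ) :=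
    Set.eq_empty_iff_forall_notMem.mpr fun i => hempty _
  rw [e1, e2]
  simp

lemma Apre_arg (g c : ℝ) (t : ℝ) :
    (-(g : ℂ) * (Complex.I * t) - (c : ℂ) / 2 * (Complex.I * t) ^ 2)
      = ((c * t^2 / 2 : ℝ) : ℂ) + ((-(g * t) : ℝ) : ℂ) * Complex.I := by
  have hIt : (Complex.I * (t:ℂ))^2 = -((t:ℂ)^2) := by
    rw [mul_pow, Complex.I_sq]; ring
  rw [hIt]
  push_cast
  ring

/-- the map ω ↦ E_ω is injective on Ω̂. -/
theorem stmt15 (ω ω' : OmegaHat) (h : ∀ z : ℂ, Eomega ω z = Eomega ω' z) :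
    ω = ω' := by
  -- fibers of aP agree
  have hfibP : ∀ r : ℝ, 0 < r → Set.ncard {i | ω.aP i = r} = Set.ncard {i | ω'.aP i = r} := by
    intro r hr
    have hr0 : (r : ℂ) ≠ 0 := by exact_mod_cast hr.ne'
    have hNN := NN_eq ω ω' h (r : ℂ)⁻¹ (inv_ne_zero hr0)
    have hset : ∀ (σ : OmegaHat), NN σ (r:ℂ)⁻¹ = Set.ncard {i | σ.aP i = r} := by
      intro σ
      rw [NN]
      have e1 : {i | (σ.aP i : ℂ) * (r:ℂ)⁻¹ = 1} = {i | σ.aP i = r} := by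
        ext i
        simp only [Set.mem_setOf_eq]
        rw [mul_inv_eq_one₀ hr0]
        exact_mod_cast Iff.rfl
      have e2 : {i | ((-(σ.aM i) : ℝ) : ℂ) * (r:ℂ)⁻¹ = 1} = (∅ : Set ℕ) := by
        ext i
        simp only [Set.mem_setOf_eq, Set.mem_empty_iff_false, iff_false]
        rw [mul_inv_eq_one₀ hr0]
        intro hc
        have : -(σ.aM i) = r := by exact_mod_cast hc
        have := σ.aM_nonneg i
        linarith
      rw [e1, e2]
      simp
    rw [hset ω, hset ω'] at hNN
    exact hNN
  -- fibers of aM agree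
  have hfibM : ∀ r : ℝ, 0 < r → Set.ncard {i | ω.aM i = r} = Set.ncard {i | ω'.aM i = r} := by
    intro r hr
    have hr0 : ((-r : ℝ) : ℂ) ≠ 0 := by
      simp only [Complex.ofReal_neg, ne_eq, neg_eq_zero]
      exact_mod_cast hr.ne'
    have hNN := NN_eq ω ω' h ((-r : ℝ):ℂ)⁻¹ (inv_ne_zero hr0)
    have hset : ∀ (σ : OmegaHat), NN σ ((-r : ℝ):ℂ)⁻¹ = Set.ncard {i | σ.aM i = r} := by
      intro σ
      rw [NN]
      have e1 : {i | (σ.aP i : ℂ) * ((-r:ℝ):ℂ)⁻¹ = 1} = (∅ : Set ℕ) := by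
        ext i
        simp only [Set.mem_setOf_eq, Set.mem_empty_iff_false, iff_false]
        rw [mul_inv_eq_one₀ hr0]
        intro hc
        have hc' : σ.aP i = -r := by exact_mod_cast hc
        have := σ.aP_nonneg i
        linarith
      have e2 : {i | ((-(σ.aM i) : ℝ) : ℂ) * ((-r:ℝ):ℂ)⁻¹ = 1} = {i | σ.aM i = r} := by
        ext i
        simp only [Set.mem_setOf_eq]
        rw [mul_inv_eq_one₀ hr0]
        constructor
        · intro hc
          have : -(σ.aM i) = -r := by exact_mod_cast hc
          linarith
        · intro hc
          rw [hc]
      rw [e1, e2]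
      simp
    rw [hset ω, hset ω'] at hNN
    exact hNN
  have haP : ω.aP = ω'.aP :=
    seq_eq_of_fibers ω.aP_nonneg ω'.aP_nonneg ω.aP_antitone ω'.aP_antitone
      (abs_tendsto_zero ω.summable_aP_sq) (abs_tendsto_zero ω'.summable_aP_sq) hfibP
  have haM : ω.aM = ω'.aM :=
    seq_eq_of_fibers ω.aM_nonneg ω'.aM_nonneg ω.aM_antitone ω'.aM_antitone
      (abs_tendsto_zero ω.summable_aM_sq) (abs_tendsto_zero ω'.summable_aM_sq) hfibM
  -- prefactors agree on the imaginary axis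
  have hA : ∀ t : ℝ, t ≠ 0 → Apre ω (Complex.I * t) = Apre ω' (Complex.I * t) := by
    intro t ht
    have hz₀ : (Complex.I * t : ℂ) ≠ 0 := by
      apply mul_ne_zero Complex.I_ne_zero
      exact_mod_cast ht
    obtain ⟨C, hC, hC0, hev⟩ := Efactor ω (Complex.I * t) hz₀
    have hEne : Eomega ω (Complex.I * t) ≠ 0 := by
      have h0 := hev.self_of_nhds
      rw [h0, NN_I_eq_zero, pow_zero, one_mul]
      exact hC0
    rw [Eomega_eq] at hEne
    have hP1 : (∏' i, ef (ω.aP i) (Complex.I * t)) ≠ 0 := fun hc => hEne (by rw [hc]; ring)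
    have hP2 : (∏' i, ef (-(ω.aM i)) (Complex.I * t)) ≠ 0 := fun hc => hEne (by rw [hc]; ring)
    have heq := h (Complex.I * t)
    rw [Eomega_eq, Eomega_eq, ← haP, ← haM] at heq
    have := mul_right_cancel₀ hP2 heq
    exact mul_right_cancel₀ hP1 this
  -- extract gamma2
  have hg2 : gamma2 ω = gamma2 ω' := by
    have h1 := hA 1 one_ne_zero
    rw [Apre, Apre, Apre_arg, Apre_arg] at h1
    have habs := congrArg (‖·‖) h1
    rw [Complex.norm_exp, Complex.norm_exp] at habs
    simp only [Complex.add_re, Complex.ofReal_re, Complex.mul_re, Complex.I_re,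
      Complex.ofReal_im, Complex.I_im, mul_zero, mul_one, zero_sub, zero_mul, sub_zero] at habs
    have h2 := Real.exp_eq_exp.mp habs
    nlinarith [h2]
  -- extract g1
  have hg1 : ω.g1 = ω'.g1 := by
    by_contra hne
    set d : ℝ := ω'.g1 - ω.g1 with hd
    have hdne : d ≠ 0 := fun hc => hne (by rw [hd] at hc; linarith)
    have key : ∀ t : ℝ, t ≠ 0 → ∃ n : ℤ, d * t = 2 * Real.pi * n := by
      intro t ht
      have h1 := hA t ht
      rw [Apre, Apre, Apre_arg, Apre_arg, hg2] at h1
      obtain ⟨n, hn⟩ := Complex.exp_eq_exp_iff_exists_int.mp h1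
      have him := congrArg Complex.im hn
      simp only [Complex.add_im, Complex.ofReal_im, Complex.mul_im, Complex.I_im,
        Complex.ofReal_re, Complex.I_re, mul_zero, mul_one, zero_mul, add_zero, zero_add,
        Complex.intCast_im, Complex.intCast_re] at him
      refine ⟨n, ?_⟩
      have h2re : ((2:ℂ) * (Real.pi:ℂ)).re = 2*Real.pi := by simp
      rw [h2re] at him
      have hexp : (ω'.g1 - ω.g1) * t = ω'.g1*t - ω.g1*t := by ring
      rw [hd, hexp]
      linarith [him]
    obtain ⟨n, hn⟩ := key (Real.pi / d) (div_ne_zero Real.pi_ne_zero hdne)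
    rw [mul_div_cancel₀ _ hdne] at hn
    have hpi := Real.pi_ne_zero
    have hpieq : Real.pi * 1 = Real.pi * (2 * n) := by linear_combination hn
    have : (1 : ℝ) = 2 * n := mul_left_cancel₀ Real.pi_ne_zero hpieq
    have h2n : (2 * n : ℤ) = 1 := by exact_mod_cast this.symm
    omega
  -- extract del
  have hdel : ω.del = ω'.del := by
    rw [gamma2, gamma2, haP, haM] at hg2
    linarith [hg2]
  rcases ω with ⟨aP, aM, g1, del, p1, p2, p3, p4, p5, p6, p7, p8⟩
  rcases ω' with ⟨aP', aM', g1', del', q1, q2, q3, q4, q5, q6, q7, q8⟩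
  simp only [OmegaHat.mk.injEq]
  exact ⟨haP, haM, hg1, hdel⟩
end
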